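/- The degenerate Stirling numbers of the second kind {n brace k}_λ, defined by (x)_{n,λ} = Σ_{k=0}^n {n brace k}_λ (x)_k (where (x)_k is the ordinary falling factorial), satisfy the generating function identity (1/k!)(e_λ(t) − 1)^k = Σ_{n=k}^∞ {n brace k}_λ t^n/n! as formal power series, where e_λ(t) = (1+λt)^{1/λ} is interpreted as the formal power series Σ_{m≥0} (1)_{m,λ} t^m/m!. -/

import Mathlib

open PowerSeries

/-- The degenerate falling factorial `(x)_{n,λ}`. -/
def degFall (lam x : ℝ) (n : ℕ) : ℝ := ∏ i ∈ Finset.range n, (x - i * lam)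

/-- The ordinary falling factorial `(x)_k`. -/
def fallF (x : ℝ) (k : ℕ) : ℝ := ∏ i ∈ Finset.range k, (x - i)

/-- The degenerate exponential `e_λ^y(t)` as the formal power series
`Σ_{m≥0} (y)_{m,λ} t^m/m!`. -/
noncomputable def degExpP (lam y : ℝ) : PowerSeries ℝ :=
  PowerSeries.mk fun m => degFall lam y m / (Nat.factorial m)

lemma degFall_zero (lam x : ℝ) : degFall lam x 0 = 1 := by simp [degFall]

lemma degFall_succ (lam x : ℝ) (n : ℕ) :
    degFall lam x (n + 1) = degFall lam x n * (x - n * lam) := by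
  simp [degFall, Finset.prod_range_succ]

lemma fallF_nat (j m : ℕ) : fallF (j : ℝ) m = (j.descFactorial m : ℝ) := by
  induction m with
  | zero => simp [fallF]
  | succ m ih =>
    have h : fallF (j : ℝ) (m + 1) = fallF (j : ℝ) m * ((j : ℝ) - m) := by
      simp [fallF, Finset.prod_range_succ]
    rw [h, ih, Nat.descFactorial_succ]
    rcases le_or_gt (m + 1) j with hj | hj
    · have : ((j - m : ℕ) : ℝ) = (j : ℝ) - m := by
        push_cast [Nat.cast_sub (le_trans (Nat.le_succ m) hj)]; ring
      push_cast
      rw [← this]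
      ring
    · have hjm : j.descFactorial m * ((j:ℝ) - m) = 0 := by
        rcases Nat.lt_succ_iff_lt_or_eq.mp hj with h' | h'
        · rw [Nat.descFactorial_eq_zero_iff_lt.mpr h']; simp
        · simp [h']
      rw [hjm]
      have : j - m = 0 := by omega
      simp [this]

lemma key_sum (k m : ℕ) :
    ∑ j ∈ Finset.range (k + 1), (-1 : ℝ) ^ (k - j) * (k.choose j) * (j.descFactorial m : ℝ)
      = if m = k then (Nat.factorial k : ℝ) else 0 := by
  rcases le_or_gt m k with hmk | hmk
  · -- terms with j < m vanish
    have h1 : ∑ j ∈ Finset.range (k + 1),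
        (-1 : ℝ) ^ (k - j) * (k.choose j) * (j.descFactorial m : ℝ)
        = ∑ j ∈ Finset.Ico m (k + 1),
        (-1 : ℝ) ^ (k - j) * (k.choose j) * (j.descFactorial m : ℝ) := by
      rw [Finset.range_eq_Ico, ← Finset.sum_Ico_consecutive _ (Nat.zero_le m) (by omega)]
      have : ∑ j ∈ Finset.Ico 0 m,
          (-1 : ℝ) ^ (k - j) * (k.choose j) * (j.descFactorial m : ℝ) = 0 := by
        apply Finset.sum_eq_zero
        intro j hj
        simp only [Finset.mem_Ico] at hj
        rw [Nat.descFactorial_eq_zero_iff_lt.mpr hj.2]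
        simp
      rw [this, zero_add]
    rw [h1, Finset.sum_Ico_eq_sum_range]
    have h2 : ∀ i ∈ Finset.range (k + 1 - m),
        (-1 : ℝ) ^ (k - (m + i)) * (k.choose (m + i)) * (((m + i).descFactorial m : ℕ) : ℝ)
        = ((Nat.factorial m : ℝ) * (k.choose m)) *
          ((-1 : ℝ) ^ ((k - m) - i) * ((k - m).choose i)) := by
      intro i hi
      simp only [Finset.mem_range] at hi
      have him : m + i ≤ k := by omega
      have hcc : k.choose (m + i) * (m + i).choose m = k.choose m * (k - m).choose i := by
        have := Nat.choose_mul (n := k) (Nat.le_add_right m i)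
        simpa [Nat.add_sub_cancel_left] using this
      rw [Nat.descFactorial_eq_factorial_mul_choose]
      have : k - (m + i) = (k - m) - i := by omega
      rw [this]
      have hccR : (k.choose (m + i) : ℝ) * ((m + i).choose m : ℝ)
          = (k.choose m : ℝ) * ((k - m).choose i : ℝ) := by exact_mod_cast hcc
      push_cast
      linear_combination ((-1 : ℝ) ^ (k - m - i) * (Nat.factorial m : ℝ)) * hccR
    rw [Finset.sum_congr rfl h2, ← Finset.mul_sum]
    have h3 : k + 1 - m = (k - m) + 1 := by omega
    rw [h3]
    have h4 : ∑ i ∈ Finset.range ((k - m) + 1),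
        (-1 : ℝ) ^ ((k - m) - i) * ((k - m).choose i)
        = if k - m = 0 then 1 else 0 := by
      have := Int.alternating_sum_range_choose (n := k - m)
      have hsign : ∀ i ∈ Finset.range ((k - m) + 1),
          (-1 : ℝ) ^ ((k - m) - i) * ((k - m).choose i)
          = (-1 : ℝ) ^ (k - m) * ((-1 : ℝ) ^ i * ((k - m).choose i)) := by
        intro i hi
        simp only [Finset.mem_range] at hi
        have hpow : (-1 : ℝ) ^ (k - m) * (-1 : ℝ) ^ i = (-1 : ℝ) ^ ((k - m) - i) := by
          rw [← pow_add]
          have h' : (k - m) + i = ((k - m) - i) + 2 * i := by omega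
          rw [h', pow_add, pow_mul]
          norm_num
        rw [← hpow]
        ring
      rw [Finset.sum_congr rfl hsign, ← Finset.mul_sum]
      have hcast : (∑ i ∈ Finset.range ((k - m) + 1), (-1 : ℝ) ^ i * ((k - m).choose i))
          = ((∑ i ∈ Finset.range ((k - m) + 1), ((-1) ^ i * ((k - m).choose i) : ℤ) : ℤ) : ℝ) := by
        push_cast
        rfl
      rw [hcast, this]
      rcases eq_or_ne (k - m) 0 with h | h
      · simp [h]
      · simp [h]
    rw [h4]
    rcases eq_or_ne m k with h | h
    · subst h
      simp [Nat.choose_self, Nat.sub_self]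
    · have : k - m ≠ 0 := by omega
      simp [h, this]
  · -- m > k : all terms vanish
    have : ∑ j ∈ Finset.range (k + 1),
        (-1 : ℝ) ^ (k - j) * (k.choose j) * (j.descFactorial m : ℝ) = 0 := by
      apply Finset.sum_eq_zero
      intro j hj
      simp only [Finset.mem_range] at hj
      rw [Nat.descFactorial_eq_zero_iff_lt.mpr (by omega)]
      simp
    rw [this, if_neg (by omega)]

lemma degFall_add (lam y z : ℝ) (n : ℕ) :
    degFall lam (y + z) n
      = ∑ m ∈ Finset.range (n + 1),
          (n.choose m : ℝ) * degFall lam y m * degFall lam z (n - m) := by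
  induction n with
  | zero => simp [degFall]
  | succ n ih =>
    rw [degFall_succ, ih, Finset.sum_mul]
    have hsplit : ∀ m ∈ Finset.range (n + 1),
        (n.choose m : ℝ) * degFall lam y m * degFall lam z (n - m) * (y + z - n * lam)
        = (n.choose m : ℝ) * degFall lam y (m + 1) * degFall lam z (n - m)
          + (n.choose m : ℝ) * degFall lam y m * degFall lam z (n - m + 1) := by
      intro m hm
      simp only [Finset.mem_range] at hm
      have hmn : m ≤ n := by omega
      rw [degFall_succ, degFall_succ]
      have hc : ((n - m : ℕ) : ℝ) = (n : ℝ) - m := by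
        push_cast [Nat.cast_sub hmn]; ring
      rw [hc]
      ring
    rw [Finset.sum_congr rfl hsplit, Finset.sum_add_distrib]
    -- RHS
    rw [Finset.sum_range_succ' (fun m => ((n+1).choose m : ℝ) * degFall lam y m
        * degFall lam z (n + 1 - m))]
    have hgoal1 : ∀ i ∈ Finset.range (n + 1),
        (((n+1).choose (i+1) : ℕ) : ℝ) * degFall lam y (i+1) * degFall lam z (n + 1 - (i+1))
        = (n.choose i : ℝ) * degFall lam y (i + 1) * degFall lam z (n - i)
          + (n.choose (i+1) : ℝ) * degFall lam y (i+1) * degFall lam z (n - i) := by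
      intro i hi
      have : (n + 1).choose (i + 1) = n.choose i + n.choose (i + 1) := Nat.choose_succ_succ n i
      rw [this]
      have : n + 1 - (i + 1) = n - i := by omega
      rw [this]
      push_cast
      ring
    rw [Finset.sum_congr rfl hgoal1, Finset.sum_add_distrib, add_assoc]
    congr 1
    -- remaining: second sums match
    rw [Finset.sum_range_succ' (fun m => (n.choose m : ℝ) * degFall lam y m
        * degFall lam z (n - m + 1))]
    have h0 : (((n+1).choose 0 : ℕ) : ℝ) * degFall lam y 0 * degFall lam z (n + 1 - 0)
        = degFall lam z (n + 1) := by simp [degFall_zero]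
    rw [h0]
    have hlast : ∑ i ∈ Finset.range (n + 1),
        (n.choose (i+1) : ℝ) * degFall lam y (i+1) * degFall lam z (n - i)
        = ∑ i ∈ Finset.range n,
        (n.choose (i+1) : ℝ) * degFall lam y (i+1) * degFall lam z (n - (i+1) + 1) := by
      rw [Finset.sum_range_succ, Nat.choose_succ_self]
      simp only [Nat.cast_zero, zero_mul, add_zero]
      apply Finset.sum_congr rfl
      intro i hi
      simp only [Finset.mem_range] at hi
      have : n - (i + 1) + 1 = n - i := by omega
      rw [this]
    rw [hlast]
    congr 1
    simp [degFall_zero]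

lemma degExpP_mul (lam y z : ℝ) :
    degExpP lam y * degExpP lam z = degExpP lam (y + z) := by
  ext n
  rw [PowerSeries.coeff_mul]
  simp only [degExpP, PowerSeries.coeff_mk]
  rw [Finset.Nat.sum_antidiagonal_eq_sum_range_succ_mk]
  rw [degFall_add, Finset.sum_div]
  apply Finset.sum_congr rfl
  intro m hm
  simp only [Finset.mem_range] at hm
  have hmn : m ≤ n := by omega
  have hfac : (n.choose m : ℝ) * (Nat.factorial m) * (Nat.factorial (n - m))
      = (Nat.factorial n : ℝ) := by
    exact_mod_cast congrArg (Nat.cast (R := ℝ)) (Nat.choose_mul_factorial_mul_factorial hmn)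
  have h1 : (Nat.factorial m : ℝ) ≠ 0 := Nat.cast_ne_zero.mpr (Nat.factorial_ne_zero m)
  have h2 : (Nat.factorial (n - m) : ℝ) ≠ 0 := Nat.cast_ne_zero.mpr (Nat.factorial_ne_zero _)
  have h3 : (Nat.factorial n : ℝ) ≠ 0 := Nat.cast_ne_zero.mpr (Nat.factorial_ne_zero n)
  field_simp
  rw [← hfac]
  ring

lemma degExpP_zero (lam : ℝ) : degExpP lam 0 = 1 := by
  ext n
  cases n with
  | zero => simp [degExpP, degFall]
  | succ n =>
    simp only [degExpP, PowerSeries.coeff_mk]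
    have : degFall lam 0 (n + 1) = 0 := by
      simp [degFall, Finset.prod_range_succ']
    rw [this]
    simp [PowerSeries.coeff_one]

lemma degExpP_pow (lam : ℝ) (j : ℕ) : degExpP lam 1 ^ j = degExpP lam j := by
  induction j with
  | zero => simpa using (degExpP_zero lam).symm
  | succ j ih =>
    rw [pow_succ, ih, degExpP_mul]
    norm_num

/-- The degenerate Stirling numbers of the second kind `S n k = {n brace k}_λ`,
defined by `(x)_{n,λ} = Σ_{k=0}^n {n brace k}_λ (x)_k`, satisfy
`(1/k!)(e_λ(t) − 1)^k = Σ_{n=k}^∞ {n brace k}_λ t^n/n!` as formal power series. -/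
theorem stmt1 (lam : ℝ) (S : ℕ → ℕ → ℝ)
    (hS : ∀ (n : ℕ) (x : ℝ),
      degFall lam x n = ∑ k ∈ Finset.range (n + 1), S n k * fallF x k) (k : ℕ) :
    PowerSeries.C (1 / (Nat.factorial k : ℝ)) * (degExpP lam 1 - 1) ^ k =
      PowerSeries.mk fun n => if k ≤ n then S n k / (Nat.factorial n) else 0 := by
  have hE : (degExpP lam 1 - 1) ^ k
      = ∑ j ∈ Finset.range (k + 1),
          PowerSeries.C ((-1 : ℝ) ^ (k - j) * (k.choose j)) * degExpP lam j := by
    rw [sub_eq_add_neg, add_pow]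
    apply Finset.sum_congr rfl
    intro j hj
    rw [degExpP_pow]
    have hneg : (-1 : PowerSeries ℝ) ^ (k - j) = PowerSeries.C ((-1 : ℝ) ^ (k - j)) := by
      rw [map_pow, map_neg, map_one]
    have hnat : ((k.choose j : ℕ) : PowerSeries ℝ) = PowerSeries.C ((k.choose j : ℕ) : ℝ) := by
      rw [map_natCast]
    rw [hneg, hnat, map_mul]
    ring
  rw [hE]
  ext n
  rw [PowerSeries.coeff_mk, PowerSeries.coeff_C_mul, map_sum]
  have hterm : ∀ j ∈ Finset.range (k + 1),
      (PowerSeries.coeff n) (PowerSeries.C ((-1 : ℝ) ^ (k - j) * (k.choose j))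
        * degExpP lam j)
      = (-1 : ℝ) ^ (k - j) * (k.choose j) * (degFall lam j n / (Nat.factorial n)) := by
    intro j hj
    rw [PowerSeries.coeff_C_mul]
    simp [degExpP, PowerSeries.coeff_mk]
  rw [Finset.sum_congr rfl hterm]
  have hsum : ∑ j ∈ Finset.range (k + 1),
      (-1 : ℝ) ^ (k - j) * (k.choose j) * (degFall lam j n / (Nat.factorial n))
      = (if k ≤ n then S n k * (Nat.factorial k) / (Nat.factorial n) else 0) := by
    have hrw : ∀ j ∈ Finset.range (k + 1),
        (-1 : ℝ) ^ (k - j) * (k.choose j) * (degFall lam j n / (Nat.factorial n))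
        = ∑ m ∈ Finset.range (n + 1),
            (S n m / (Nat.factorial n))
              * ((-1 : ℝ) ^ (k - j) * (k.choose j) * (j.descFactorial m : ℝ)) := by
      intro j hj
      rw [hS n j, Finset.sum_div, Finset.mul_sum]
      apply Finset.sum_congr rfl
      intro m hm
      rw [fallF_nat]
      ring
    rw [Finset.sum_congr rfl hrw, Finset.sum_comm]
    have hinner : ∀ m ∈ Finset.range (n + 1),
        ∑ j ∈ Finset.range (k + 1),
          (S n m / (Nat.factorial n))
            * ((-1 : ℝ) ^ (k - j) * (k.choose j) * (j.descFactorial m : ℝ))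
        = (S n m / (Nat.factorial n)) * (if m = k then (Nat.factorial k : ℝ) else 0) := by
      intro m hm
      rw [← Finset.mul_sum, key_sum]
    rw [Finset.sum_congr rfl hinner]
    have hmove : ∀ m ∈ Finset.range (n + 1),
        (S n m / (Nat.factorial n)) * (if m = k then (Nat.factorial k : ℝ) else 0)
        = if m = k then S n m * (Nat.factorial k) / (Nat.factorial n) else 0 := by
      intro m hm
      split_ifs
      · ring
      · ring
    rw [Finset.sum_congr rfl hmove, Finset.sum_ite_eq']
    simp [Nat.lt_succ_iff]
  rw [hsum]
  have hk : (Nat.factorial k : ℝ) ≠ 0 := Nat.cast_ne_zero.mpr (Nat.factorial_ne_zero k)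
  rcases le_or_gt k n with h | h
  · rw [if_pos h, if_pos h]
    field_simp
  · rw [if_neg (not_le.mpr h), if_neg (not_le.mpr h), mul_zero]
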